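/- arXiv:2201.08113 — 6 statements merged into one kernel-verified Lean document; each statement's English description precedes it below -/
import Mathlib

section
/- The ℤ-bilinear form F on X^∨ × X^∨ defined by F(u,v) := u(φ(v)) is symmetric and positive definite; that is, u(φ(v)) = v(φ(u)) for all u, v ∈ X^∨, u(φ(u)) ≥ 0 for all u ∈ X^∨, and u(φ(u)) = 0 if and only if u = 0. -/
open scoped BigOperators Pointwise

namespace NFC

/-- The coordinatewise embedding of the lattice `X = ℤ^g` into `X_ℝ = ℝ^g`. -/
def iota {g : ℕ} (x : Fin g → ℤ) : Fin g → ℝ := fun i => (x i : ℝ)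

/-- The ℝ-linear extension of an integral linear functional `u ∈ X^∨` to `X_ℝ`. -/
noncomputable def extd {g : ℕ} (u : (Fin g → ℤ) →ₗ[ℤ] ℤ) (x : Fin g → ℝ) : ℝ :=
  ∑ i, (u (Pi.single i 1) : ℝ) * x i

/-- `E_ℓ(u) = ℓ · u(φ(u))`. -/
def El {g : ℕ} {Y : Submodule ℤ (Fin g → ℤ)}
    (φ : ((Fin g → ℤ) →ₗ[ℤ] ℤ) → Y) (ℓ : ℕ) (u : (Fin g → ℤ) →ₗ[ℤ] ℤ) : ℤ :=
  (ℓ : ℤ) * u (φ u : Fin g → ℤ)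

/-- `Σ_ℓ = {α ∈ X : E_ℓ(u) + u(α) ≥ 0 for all u ∈ X^∨}`. -/
def SigmaL {g : ℕ} {Y : Submodule ℤ (Fin g → ℤ)}
    (φ : ((Fin g → ℤ) →ₗ[ℤ] ℤ) → Y) (ℓ : ℕ) : Set (Fin g → ℤ) :=
  {α | ∀ u : (Fin g → ℤ) →ₗ[ℤ] ℤ, 0 ≤ El φ ℓ u + u α}

/-- The Voronoi polytope `Σ_ℓ(c)`, defined w.r.t. the norm `‖z‖ = √(B̄(z,z))`. -/
noncomputable def VorP {g : ℕ} {Y : Submodule ℤ (Fin g → ℤ)}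
    (Bb : (Fin g → ℝ) →ₗ[ℝ] (Fin g → ℝ) →ₗ[ℝ] ℝ)
    (φ : ((Fin g → ℤ) →ₗ[ℤ] ℤ) → Y) (ℓ : ℕ)
    (c : (Fin g → ℤ) →ₗ[ℤ] ℤ) : Set (Fin g → ℝ) :=
  {x | ∀ u : (Fin g → ℤ) →ₗ[ℤ] ℤ,
    Real.sqrt (Bb (x - iota ((2 * (ℓ : ℤ)) • ((φ c : Fin g → ℤ))))
               (x - iota ((2 * (ℓ : ℤ)) • ((φ c : Fin g → ℤ))))) ≤
    Real.sqrt (Bb (x - iota ((2 * (ℓ : ℤ)) • ((φ u : Fin g → ℤ))))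
               (x - iota ((2 * (ℓ : ℤ)) • ((φ u : Fin g → ℤ)))))}

/-- A subset `Δ ⊆ X_ℝ` is integral: a bounded convex polytope equal to the convex hull
of `Δ ∩ X`, symmetric about `0`, containing `0`, with `Δ ∩ X` containing a ℤ-basis. -/
def IsIntegral {g : ℕ} (Δ : Set (Fin g → ℝ)) : Prop :=
  Bornology.IsBounded Δ ∧
  Δ = convexHull ℝ (Δ ∩ Set.range (iota (g := g))) ∧
  Δ = -Δ ∧ (0 : Fin g → ℝ) ∈ Δ ∧
  ∃ b : Module.Basis (Fin g) ℤ (Fin g → ℤ), ∀ i, iota (b i) ∈ Δ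

/-- `Σ_ℓ^α = (α + 2ℓφ(X^∨)) ∩ Σ_ℓ`. -/
def SigmaAlpha {g : ℕ} {Y : Submodule ℤ (Fin g → ℤ)}
    (φ : ((Fin g → ℤ) →ₗ[ℤ] ℤ) → Y) (ℓ : ℕ) (α : Fin g → ℤ) : Set (Fin g → ℤ) :=
  {β | β ∈ SigmaL φ ℓ ∧ ∃ u : (Fin g → ℤ) →ₗ[ℤ] ℤ, β = α + (2 * (ℓ : ℤ)) • ((φ u : Fin g → ℤ))}

/-- The convex cone generated by a set `S` (the set of all nonnegative combinations). -/
def conicHull {M : Type*} [AddCommMonoid M] [Module ℝ M] (S : Set M) : Set M :=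
  {y | ∃ (n : ℕ) (c : Fin n → ℝ) (v : Fin n → M),
    (∀ i, 0 ≤ c i) ∧ (∀ i, v i ∈ S) ∧ y = ∑ i, c i • v i}

/-- `Cone(C_ℓ^β)`: the convex cone in `X_ℝ` generated by `{γ − β : γ ∈ Σ_ℓ}`. -/
def coneC {g : ℕ} {Y : Submodule ℤ (Fin g → ℤ)}
    (φ : ((Fin g → ℤ) →ₗ[ℤ] ℤ) → Y) (ℓ : ℕ) (β : Fin g → ℤ) : Set (Fin g → ℝ) :=
  conicHull {w | ∃ γ ∈ SigmaL φ ℓ, w = iota (γ - β)}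


/-- the bilinear form `F(u,v) = u(φ(v))` on `X^∨ × X^∨` is symmetric and
positive definite. -/
theorem statement0
    (g : ℕ) (hg : 1 ≤ g)
    (Y : Submodule ℤ (Fin g → ℤ))
    (hYfin : Y.toAddSubgroup.index ≠ 0)
    (B : Y →ₗ[ℤ] (Fin g → ℤ) →ₗ[ℤ] ℤ)
    (hBsymm : ∀ y z : Y, B y (z : Fin g → ℤ) = B z (y : Fin g → ℤ))
    (hBpos : ∀ y : Y, y ≠ 0 → 0 < B y (y : Fin g → ℤ))
    (N : ℕ) (hN : N = (LinearMap.range B).toAddSubgroup.index) (hNpos : 0 < N)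
    (φ : ((Fin g → ℤ) →ₗ[ℤ] ℤ) → Y)
    (hφ : ∀ u : (Fin g → ℤ) →ₗ[ℤ] ℤ, B (φ u) = (N : ℤ) • u) :
    (∀ u v : (Fin g → ℤ) →ₗ[ℤ] ℤ, u (φ v : Fin g → ℤ) = v (φ u : Fin g → ℤ)) ∧
    (∀ u : (Fin g → ℤ) →ₗ[ℤ] ℤ, 0 ≤ u (φ u : Fin g → ℤ)) ∧
    (∀ u : (Fin g → ℤ) →ₗ[ℤ] ℤ, u (φ u : Fin g → ℤ) = 0 ↔ u = 0) := by
  have hNz : (N:ℤ) ≠ 0 := by exact_mod_cast hNpos.ne'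
  have key : ∀ u v : (Fin g → ℤ) →ₗ[ℤ] ℤ,
      (N:ℤ) * u (φ v : Fin g → ℤ) = B (φ u) (φ v : Fin g → ℤ) := by
    intro u v
    have := LinearMap.congr_fun (hφ u) (φ v : Fin g → ℤ)
    simpa using this.symm
  have symm : ∀ u v : (Fin g → ℤ) →ₗ[ℤ] ℤ,
      u (φ v : Fin g → ℤ) = v (φ u : Fin g → ℤ) := by
    intro u v
    have h1 := key u v
    have h2 := key v u
    have h3 := hBsymm (φ u) (φ v)
    have : (N:ℤ) * u (φ v : Fin g → ℤ) = (N:ℤ) * v (φ u : Fin g → ℤ) := by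
      rw [h1, h2, h3]
    exact mul_left_cancel₀ hNz this
  have hzero : ∀ u : (Fin g → ℤ) →ₗ[ℤ] ℤ, φ u = 0 → u = 0 := by
    intro u h
    have := hφ u
    rw [h, map_zero] at this
    have : (N:ℤ) • u = 0 := this.symm
    rcases smul_eq_zero.mp this with h' | h'
    · exact absurd h' hNz
    · exact h'
  have pos : ∀ u : (Fin g → ℤ) →ₗ[ℤ] ℤ, u ≠ 0 → 0 < u (φ u : Fin g → ℤ) := by
    intro u hu
    have hφu : φ u ≠ 0 := fun h => hu (hzero u h)
    have h1 := key u u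
    have h2 := hBpos (φ u) hφu
    nlinarith [h2, h1]
  refine ⟨symm, ?_, ?_⟩
  · intro u
    by_cases hu : u = 0
    · simp [hu]
    · exact (pos u hu).le
  · intro u
    constructor
    · intro h
      by_contra hu
      exact (pos u hu).ne' h
    · intro h; simp [h]


end NFC
end

section
/- Σ_ℓ is a finite subset of X, and Σ_ℓ + 2ℓφ(X^∨) = X; that is, every x ∈ X can be written as x = γ + 2ℓφ(u) with γ ∈ Σ_ℓ and u ∈ X^∨. -/
open scoped BigOperators Pointwise

namespace NFC

/-- `Σ_ℓ` is finite and `Σ_ℓ + 2ℓφ(X^∨) = X`. -/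
theorem statement4
    (g : ℕ) (hg : 1 ≤ g)
    (Y : Submodule ℤ (Fin g → ℤ))
    (hYfin : Y.toAddSubgroup.index ≠ 0)
    (B : Y →ₗ[ℤ] (Fin g → ℤ) →ₗ[ℤ] ℤ)
    (hBsymm : ∀ y z : Y, B y (z : Fin g → ℤ) = B z (y : Fin g → ℤ))
    (hBpos : ∀ y : Y, y ≠ 0 → 0 < B y (y : Fin g → ℤ))
    (N : ℕ) (hN : N = (LinearMap.range B).toAddSubgroup.index) (hNpos : 0 < N)
    (φ : ((Fin g → ℤ) →ₗ[ℤ] ℤ) → Y)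
    (hφ : ∀ u : (Fin g → ℤ) →ₗ[ℤ] ℤ, B (φ u) = (N : ℤ) • u)
    (Bb : (Fin g → ℝ) →ₗ[ℝ] (Fin g → ℝ) →ₗ[ℝ] ℝ)
    (hBbsymm : ∀ x y : Fin g → ℝ, Bb x y = Bb y x)
    (hBbpos : ∀ x : Fin g → ℝ, x ≠ 0 → 0 < Bb x x)
    (hBbcompat : ∀ (y : Y) (x : Fin g → ℤ), Bb (iota (y : Fin g → ℤ)) (iota x) = (B y x : ℝ))
    (ℓ : ℕ) (hℓ : 0 < ℓ) :
    (SigmaL φ ℓ).Finite ∧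
    (∀ x : Fin g → ℤ, ∃ γ ∈ SigmaL φ ℓ, ∃ u : (Fin g → ℤ) →ₗ[ℤ] ℤ,
      x = γ + (2 * (ℓ : ℤ)) • ((φ u : Fin g → ℤ))) := by
  classical
  -- B is injective on Y
  have hBinj : ∀ y : Y, B y = 0 → y = 0 := by
    intro y hy
    by_contra h
    have := hBpos y h
    rw [hy] at this
    simp at this
  have hφadd : ∀ u v : (Fin g → ℤ) →ₗ[ℤ] ℤ, φ (u + v) = φ u + φ v := by
    intro u v
    have h : B (φ (u + v)) = B (φ u + φ v) := by
      rw [map_add, hφ, hφ, hφ, smul_add]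
    have h2 : B (φ (u + v) - (φ u + φ v)) = 0 := by rw [map_sub, h, sub_self]
    have := hBinj _ h2
    exact sub_eq_zero.mp this
  have hφneg : ∀ u : (Fin g → ℤ) →ₗ[ℤ] ℤ, φ (-u) = -φ u := by
    intro u
    have h : B (φ (-u)) = B (-φ u) := by
      rw [map_neg, hφ, hφ, smul_neg]
    have h2 : B (φ (-u) - (-φ u)) = 0 := by rw [map_sub, h, sub_self]
    exact sub_eq_zero.mp (hBinj _ h2)
  have hElneg : ∀ u : (Fin g → ℤ) →ₗ[ℤ] ℤ, El φ ℓ (-u) = El φ ℓ u := by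
    intro u
    simp only [El, hφneg, Submodule.coe_neg, map_neg, LinearMap.neg_apply, neg_neg]
  constructor
  · -- finiteness
    apply Set.Finite.subset
      (Set.Finite.pi (fun i : Fin g =>
        Set.finite_Icc (-(El φ ℓ (LinearMap.proj i))) (El φ ℓ (LinearMap.proj i))))
    intro α hα i _
    have h1 := hα (LinearMap.proj i)
    have h2 := hα (-(LinearMap.proj i))
    rw [hElneg] at h2
    simp only [LinearMap.proj_apply, LinearMap.neg_apply] at h1 h2
    constructor <;> [linarith; linarith]
  · -- surjectivity
    intro x
    set f : ((Fin g → ℤ) →ₗ[ℤ] ℤ) → ℤ := fun u =>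
      4 * (ℓ : ℤ) ^ 2 * B (φ u) (φ u : Fin g → ℤ) - 4 * (ℓ : ℤ) * B (φ u) x with hf
    -- lower bound for f
    have hlow : ∀ u, (⌈-(Bb (iota x) (iota x))⌉ : ℤ) ≤ f u := by
      intro u
      set z : Fin g → ℝ := iota x - (2 * (ℓ : ℝ)) • iota ((φ u : Fin g → ℤ)) with hz
      have c1 : Bb (iota ((φ u : Fin g → ℤ))) (iota x) = ((B (φ u) x : ℤ) : ℝ) :=
        hBbcompat (φ u) x
      have c2 : Bb (iota ((φ u : Fin g → ℤ))) (iota ((φ u : Fin g → ℤ)))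
          = ((B (φ u) (φ u : Fin g → ℤ) : ℤ) : ℝ) := hBbcompat (φ u) _
      have c3 : Bb (iota x) (iota ((φ u : Fin g → ℤ))) = ((B (φ u) x : ℤ) : ℝ) :=
        (hBbsymm _ _).trans c1
      have hzz : Bb z z = Bb (iota x) (iota x) + (f u : ℝ) := by
        simp only [hz, map_sub, map_smul, LinearMap.sub_apply, LinearMap.smul_apply,
          smul_eq_mul, c1, c2, c3, hf]
        push_cast
        ring
      have hzz0 : 0 ≤ Bb z z := by
        rcases eq_or_ne z 0 with h | h
        · simp [h]
        · exact le_of_lt (hBbpos z h)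
      rw [Int.ceil_le]
      push_cast
      linarith [hzz0, hzz.symm.le]
    obtain ⟨m, ⟨u₀, hu₀⟩, hmin⟩ :=
      Int.exists_least_of_bdd (P := fun z => ∃ u, f u = z)
        ⟨⌈-(Bb (iota x) (iota x))⌉, fun z hz => by obtain ⟨u, rfl⟩ := hz; exact hlow u⟩
        ⟨f 0, 0, rfl⟩
    set γ : Fin g → ℤ := x - (2 * (ℓ : ℤ)) • ((φ u₀ : Fin g → ℤ)) with hγ
    refine ⟨γ, ?_, u₀, by simp [hγ]⟩
    intro u
    have hmin' : f u₀ ≤ f (u₀ - u) := by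
      rw [hu₀]
      exact hmin _ ⟨u₀ - u, rfl⟩
    have hφsub : φ (u₀ - u) = φ u₀ - φ u := by
      rw [sub_eq_add_neg, hφadd, hφneg, sub_eq_add_neg]
    have hbsym : B (φ u₀) ((φ u : Fin g → ℤ)) = B (φ u) ((φ u₀ : Fin g → ℤ)) :=
      hBsymm (φ u₀) (φ u)
    -- expand f (u₀ - u)
    have hexp : f (u₀ - u) - f u₀
        = 4 * (ℓ : ℤ) * ((ℓ : ℤ) * B (φ u) ((φ u : Fin g → ℤ)) + B (φ u) γ) := by
      simp only [hf, hφsub, map_sub, LinearMap.sub_apply, Submodule.coe_sub, hγ,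
        map_smul, smul_eq_mul]
      rw [hbsym]
      ring
    have hkey : 0 ≤ (ℓ : ℤ) * B (φ u) ((φ u : Fin g → ℤ)) + B (φ u) γ := by
      have h4 : (0 : ℤ) < 4 * (ℓ : ℤ) := by positivity
      nlinarith [hmin', hexp]
    have hB1 : B (φ u) ((φ u : Fin g → ℤ)) = (N : ℤ) * u ((φ u : Fin g → ℤ)) := by
      rw [hφ]; simp
    have hB2 : B (φ u) γ = (N : ℤ) * u γ := by
      rw [hφ]; simp
    rw [hB1, hB2] at hkey
    have hN' : (0 : ℤ) < (N : ℤ) := by exact_mod_cast hNpos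
    simp only [SigmaL, El, Set.mem_setOf_eq] at *
    nlinarith [hkey, hN']

end NFC
end

section
/- There exists a positive integer ℓ₀ such that for every positive integer ℓ the Voronoi polytope Σ_{ℓ₀ℓ}(0) is integral. -/
open scoped BigOperators Pointwise

namespace NFC

section Aux
variable {g : ℕ}

lemma iota_zero : iota (0 : Fin g → ℤ) = 0 := by ext i; simp [iota]
lemma iota_neg (x : Fin g → ℤ) : iota (-x) = -iota x := by ext i; simp [iota]
lemma iota_zsmul (n : ℤ) (x : Fin g → ℤ) : iota (n • x) = (n : ℝ) • iota x := by
  ext i; simp [iota]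
lemma iota_single (i : Fin g) : iota (Pi.single i (1:ℤ)) = Pi.single i (1:ℝ) := by
  ext j; rcases eq_or_ne j i with h | h <;> simp [iota, Pi.single_apply, h]
lemma Bb_nonneg (Bb : (Fin g → ℝ) →ₗ[ℝ] (Fin g → ℝ) →ₗ[ℝ] ℝ)
    (hBbpos : ∀ x : Fin g → ℝ, x ≠ 0 → 0 < Bb x x) (x : Fin g → ℝ) :
    0 ≤ Bb x x := by
  rcases eq_or_ne x 0 with h | h
  · simp [h]
  · exact (hBbpos x h).le

variable {Y : Submodule ℤ (Fin g → ℤ)}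
  (Bb : (Fin g → ℝ) →ₗ[ℝ] (Fin g → ℝ) →ₗ[ℝ] ℝ)
  (φ : ((Fin g → ℤ) →ₗ[ℤ] ℤ) → Y)

/-- The linear-inequality description of the Voronoi cell. -/
def VS (t : ℝ) : Set (Fin g → ℝ) :=
  {x | ∀ u : (Fin g → ℤ) →ₗ[ℤ] ℤ,
    Bb x (iota ((φ u : Fin g → ℤ))) ≤ t * Bb (iota ((φ u : Fin g → ℤ))) (iota ((φ u : Fin g → ℤ)))}

lemma VorP_eq_VS
    (hBbsymm : ∀ x y : Fin g → ℝ, Bb x y = Bb y x)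
    (hBbpos : ∀ x : Fin g → ℝ, x ≠ 0 → 0 < Bb x x)
    (hφ0 : ((φ 0 : Y) : Fin g → ℤ) = 0)
    (t : ℕ) (ht : 0 < t) :
    VorP Bb φ t 0 = VS Bb φ (t : ℝ) := by
  ext x
  unfold VorP VS
  simp only [Set.mem_setOf_eq, hφ0, smul_zero, iota_zero, sub_zero]
  refine forall_congr' fun u => ?_
  set v := iota ((φ u : Fin g → ℤ)) with hv
  have hw : iota ((2 * (t:ℤ)) • ((φ u : Y) : Fin g → ℤ)) = (2*(t:ℝ)) • v := by
    rw [iota_zsmul]; push_cast; ring_nf; rfl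
  rw [hw]
  have h1 : Bb (x - (2*(t:ℝ))•v) (x - (2*(t:ℝ))•v)
      = Bb x x - (4*(t:ℝ))*Bb x v + (2*(t:ℝ))^2 * Bb v v := by
    simp only [map_sub, map_smul, LinearMap.sub_apply, LinearMap.smul_apply, smul_eq_mul]
    rw [hBbsymm v x]; ring
  rw [Real.sqrt_le_sqrt_iff (Bb_nonneg Bb hBbpos _), h1]
  have htpos : (0:ℝ) < t := by exact_mod_cast ht
  constructor
  · intro h; nlinarith
  · intro h; nlinarith

lemma VS_convex (t : ℝ) : Convex ℝ (VS Bb φ t) := by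
  have : VS Bb φ t = ⋂ u : (Fin g → ℤ) →ₗ[ℤ] ℤ,
      {x | Bb x (iota ((φ u : Fin g → ℤ))) ≤
        t * Bb (iota ((φ u : Fin g → ℤ))) (iota ((φ u : Fin g → ℤ)))} := by
    ext x; simp [VS, Set.mem_iInter]
  rw [this]
  refine convex_iInter fun u => convex_halfSpace_le ⟨fun a b => ?_, fun c a => ?_⟩ _
  · simp
  · simp

lemma VS_closed (t : ℝ) : IsClosed (VS Bb φ t) := by
  have : VS Bb φ t = ⋂ u : (Fin g → ℤ) →ₗ[ℤ] ℤ,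
      {x | Bb x (iota ((φ u : Fin g → ℤ))) ≤
        t * Bb (iota ((φ u : Fin g → ℤ))) (iota ((φ u : Fin g → ℤ)))} := by
    ext x; simp [VS, Set.mem_iInter]
  rw [this]
  refine isClosed_iInter fun u => ?_
  have hc : Continuous fun x : Fin g → ℝ => Bb x (iota ((φ u : Fin g → ℤ))) :=
    (Bb.flip (iota ((φ u : Fin g → ℤ)))).continuous_of_finiteDimensional
  exact isClosed_le hc continuous_const



lemma Bb_cs (hBbsymm : ∀ x y : Fin g → ℝ, Bb x y = Bb y x)
    (hBbpos : ∀ x : Fin g → ℝ, x ≠ 0 → 0 < Bb x x) (x y : Fin g → ℝ) :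
    (Bb x y) ^ 2 ≤ Bb x x * Bb y y := by
  have key : ∀ s : ℝ, 0 ≤ Bb x x * (s * s) + (2 * Bb x y) * s + Bb y y := by
    intro s
    have h := Bb_nonneg Bb hBbpos (s • x + y)
    have heq : Bb (s • x + y) (s • x + y)
        = Bb x x * (s * s) + (2 * Bb x y) * s + Bb y y := by
      simp only [map_add, map_smul, LinearMap.add_apply, LinearMap.smul_apply, smul_eq_mul]
      rw [hBbsymm y x]; ring
    rw [heq] at h; exact h
  have hd := discrim_le_zero key
  rw [discrim] at hd
  nlinarith [hd]

lemma Bb_bounds (hg : 1 ≤ g) (hBbpos : ∀ x : Fin g → ℝ, x ≠ 0 → 0 < Bb x x) :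
    ∃ m > 0, ∃ M > 0, ∀ x : Fin g → ℝ, m * ‖x‖ ^ 2 ≤ Bb x x ∧ Bb x x ≤ M * ‖x‖ ^ 2 := by
  haveI : Nonempty (Fin g) := ⟨⟨0, hg⟩⟩
  have hcont : Continuous fun x : Fin g → ℝ => Bb x x := by
    have hsingle : ∀ i : Fin g, (fun j => if i = j then (1:ℝ) else 0) = Pi.single i 1 := by
      intro i; ext j; simp [Pi.single_apply, eq_comm]
    have hrw : ∀ x : Fin g → ℝ,
        Bb x x = ∑ i, x i * ∑ j, x j * Bb (Pi.single i 1) (Pi.single j 1) := by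
      intro x
      conv_lhs => rw [LinearMap.pi_apply_eq_sum_univ Bb x]
      rw [LinearMap.sum_apply]
      refine Finset.sum_congr rfl fun i _ => ?_
      rw [LinearMap.smul_apply, smul_eq_mul, hsingle i]
      congr 1
      rw [LinearMap.pi_apply_eq_sum_univ (Bb (Pi.single i 1)) x]
      refine Finset.sum_congr rfl fun j _ => ?_
      rw [hsingle j, smul_eq_mul]
    simp only [hrw]
    continuity
  have hsne : (Metric.sphere (0 : Fin g → ℝ) 1).Nonempty := by
    refine ⟨Pi.single ⟨0, hg⟩ 1, ?_⟩
    simp [Pi.norm_single]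
  obtain ⟨zm, hzm, hzmin⟩ := (isCompact_sphere (0 : Fin g → ℝ) 1).exists_isMinOn hsne
    hcont.continuousOn
  obtain ⟨zM, hzM, hzmax⟩ := (isCompact_sphere (0 : Fin g → ℝ) 1).exists_isMaxOn hsne
    hcont.continuousOn
  have hzm1 : ‖zm‖ = 1 := by simpa using hzm
  have hzM1 : ‖zM‖ = 1 := by simpa using hzM
  have hzmne : zm ≠ 0 := by intro h; rw [h] at hzm1; simp at hzm1
  refine ⟨Bb zm zm, hBbpos zm hzmne, Bb zM zM + 1, by linarith [Bb_nonneg Bb hBbpos zM], fun x => ?_⟩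
  rcases eq_or_ne x 0 with h | h
  · simp [h]
  · have hx : ‖x‖ ≠ 0 := norm_ne_zero_iff.mpr h
    have hxpos : (0:ℝ) < ‖x‖ := norm_pos_iff.mpr h
    set u : Fin g → ℝ := ‖x‖⁻¹ • x with hu
    have hun : u ∈ Metric.sphere (0 : Fin g → ℝ) 1 := by
      simp [hu, norm_smul, abs_of_pos (inv_pos.mpr hxpos), inv_mul_cancel₀ hx]
    have hx_eq : x = ‖x‖ • u := by rw [hu, smul_inv_smul₀ hx]
    have hBx : Bb x x = ‖x‖ ^ 2 * Bb u u := by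
      conv_lhs => rw [hx_eq]
      simp only [map_smul, LinearMap.smul_apply, smul_eq_mul]; ring
    have h1 := hzmin hun
    have h2 := hzmax hun
    simp only [Set.mem_setOf_eq] at h1 h2
    constructor
    · rw [hBx]; nlinarith [sq_nonneg ‖x‖]
    · rw [hBx]; nlinarith [sq_nonneg ‖x‖, Bb_nonneg Bb hBbpos zM]


end Aux
section Chunk3
variable {g : ℕ} {Y : Submodule ℤ (Fin g → ℤ)}
  (Bb : (Fin g → ℝ) →ₗ[ℝ] (Fin g → ℝ) →ₗ[ℝ] ℝ)
  (φ : ((Fin g → ℤ) →ₗ[ℤ] ℤ) → Y)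
  (B : Y →ₗ[ℤ] (Fin g → ℤ) →ₗ[ℤ] ℤ) (N : ℕ)

lemma hsingle_eq (i : Fin g) : (fun j => if i = j then (1:ℝ) else 0) = Pi.single i 1 := by
  ext j; simp [Pi.single_apply, eq_comm]

lemma Bb_int (hBbcompat : ∀ (y : Y) (x : Fin g → ℤ), Bb (iota (y : Fin g → ℤ)) (iota x) = (B y x : ℝ))
    (y : Y) (x : Fin g → ℤ) :
    Bb (iota (y : Fin g → ℤ)) (iota x) = (B y x : ℝ) := hBbcompat y x

lemma Bb_proj (hBbcompat : ∀ (y : Y) (x : Fin g → ℤ), Bb (iota (y : Fin g → ℤ)) (iota x) = (B y x : ℝ))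
    (hφ : ∀ u : (Fin g → ℤ) →ₗ[ℤ] ℤ, B (φ u) = (N : ℤ) • u)
    (i : Fin g) (v : Fin g → ℝ) :
    Bb (iota ((φ (LinearMap.proj i) : Y) : Fin g → ℤ)) v = (N : ℝ) * v i := by
  rw [LinearMap.pi_apply_eq_sum_univ (Bb (iota ((φ (LinearMap.proj i) : Y) : Fin g → ℤ))) v]
  have hterm : ∀ j : Fin g,
      Bb (iota ((φ (LinearMap.proj i) : Y) : Fin g → ℤ)) (fun k => if j = k then (1:ℝ) else 0)
      = if i = j then (N : ℝ) else 0 := by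
    intro j
    rw [hsingle_eq j, ← iota_single j, hBbcompat]
    rw [hφ (LinearMap.proj i)]
    simp [Pi.single_apply]
  simp only [smul_eq_mul, hterm]
  simp [mul_ite, Finset.sum_ite_eq, mul_comm]

lemma VS_coord_bound
    (hBbsymm : ∀ x y : Fin g → ℝ, Bb x y = Bb y x)
    (hBbcompat : ∀ (y : Y) (x : Fin g → ℤ), Bb (iota (y : Fin g → ℤ)) (iota x) = (B y x : ℝ))
    (hBbpos : ∀ x : Fin g → ℝ, x ≠ 0 → 0 < Bb x x)
    (hφ : ∀ u : (Fin g → ℤ) →ₗ[ℤ] ℤ, B (φ u) = (N : ℤ) • u)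
    (hφneg : ∀ u, ((φ (-u) : Y) : Fin g → ℤ) = -((φ u : Y) : Fin g → ℤ))
    (hN : 0 < N) :
    ∃ R > 0, ∀ t : ℝ, 0 ≤ t → ∀ x ∈ VS Bb φ t, ∀ i, |x i| ≤ t * R := by
  set K : Fin g → ℝ := fun i =>
    Bb (iota ((φ (LinearMap.proj i) : Y) : Fin g → ℤ)) (iota ((φ (LinearMap.proj i) : Y) : Fin g → ℤ))
    with hK
  have hKnn : ∀ i, 0 ≤ K i := fun i => Bb_nonneg Bb hBbpos _
  set SK : ℝ := ∑ i, K i with hSK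
  have hSKnn : 0 ≤ SK := Finset.sum_nonneg fun i _ => hKnn i
  have hNR : (0:ℝ) < N := by exact_mod_cast hN
  refine ⟨SK / N + 1, by positivity, fun t ht x hx i => ?_⟩
  have h1 : Bb x (iota ((φ (LinearMap.proj i) : Y) : Fin g → ℤ)) ≤ t * K i := hx (LinearMap.proj i)
  have h2' := hx (-(LinearMap.proj i))
  simp only [hφneg, iota_neg, map_neg, LinearMap.neg_apply, neg_neg, mul_neg, neg_mul] at h2'
  have h2 : -(Bb x (iota ((φ (LinearMap.proj i) : Y) : Fin g → ℤ))) ≤ t * K i := by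
    simpa using h2'
  have hval : Bb x (iota ((φ (LinearMap.proj i) : Y) : Fin g → ℤ)) = (N : ℝ) * x i := by
    rw [hBbsymm]; exact Bb_proj Bb φ B N hBbcompat hφ i x
  rw [hval] at h1 h2
  have hKle : K i ≤ SK := Finset.single_le_sum (fun j _ => hKnn j) (Finset.mem_univ i)
  have habs : |(N:ℝ) * x i| ≤ t * SK := by
    rw [abs_le]
    constructor <;> nlinarith
  rw [abs_mul, abs_of_pos hNR] at habs
  have : |x i| ≤ t * SK / N := by
    rw [le_div_iff₀ hNR]; linarith [habs]
  calc |x i| ≤ t * SK / N := this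
    _ ≤ t * (SK / N + 1) := by rw [mul_add, mul_one, mul_div_assoc]; linarith
end Chunk3

section Chunk4
variable {g : ℕ}

lemma lattice_finite (r : ℝ) : {y : Fin g → ℤ | ∀ i, |(y i : ℝ)| ≤ r}.Finite := by
  have hsub : {y : Fin g → ℤ | ∀ i, |(y i : ℝ)| ≤ r}
      ⊆ Set.Icc (fun _ => -⌈r⌉) (fun _ => ⌈r⌉) := by
    intro y hy
    constructor <;> intro i <;> have h := hy i <;> rw [abs_le] at h
    · have : (-(⌈r⌉:ℤ) : ℝ) ≤ (y i : ℝ) := by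
        push_cast; linarith [Int.le_ceil r]
      exact_mod_cast this
    · have : ((y i : ℤ) : ℝ) ≤ ((⌈r⌉ : ℤ) : ℝ) := by
        push_cast; linarith [Int.le_ceil r]
      exact_mod_cast this
  exact (Set.finite_Icc _ _).subset hsub
end Chunk4

section Chunk5
variable {g : ℕ} {Y : Submodule ℤ (Fin g → ℤ)}
  (Bb : (Fin g → ℝ) →ₗ[ℝ] (Fin g → ℝ) →ₗ[ℝ] ℝ)
  (φ : ((Fin g → ℤ) →ₗ[ℤ] ℤ) → Y)
  (B : Y →ₗ[ℤ] (Fin g → ℤ) →ₗ[ℤ] ℤ)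

lemma VS_zero_mem (hBbpos : ∀ x : Fin g → ℝ, x ≠ 0 → 0 < Bb x x)
    (t : ℝ) (ht : 0 ≤ t) : (0 : Fin g → ℝ) ∈ VS Bb φ t := by
  intro u
  simp only [map_zero, LinearMap.zero_apply]
  exact mul_nonneg ht (Bb_nonneg Bb hBbpos _)

lemma VS_neg_mem (hφneg : ∀ u, ((φ (-u) : Y) : Fin g → ℤ) = -((φ u : Y) : Fin g → ℤ))
    {t : ℝ} {x : Fin g → ℝ} (hx : x ∈ VS Bb φ t) : -x ∈ VS Bb φ t := by
  intro u
  have h := hx (-u)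
  simp only [hφneg, iota_neg, map_neg, LinearMap.neg_apply, neg_neg, mul_neg, neg_mul] at h
  simp only [map_neg, LinearMap.neg_apply]
  linarith

lemma VS_symm (hφneg : ∀ u, ((φ (-u) : Y) : Fin g → ℤ) = -((φ u : Y) : Fin g → ℤ))
    (t : ℝ) : VS Bb φ t = -(VS Bb φ t) := by
  ext x
  constructor
  · intro hx
    rw [Set.mem_neg]
    exact VS_neg_mem Bb φ hφneg hx
  · intro hx
    rw [Set.mem_neg] at hx
    simpa using VS_neg_mem Bb φ hφneg hx

lemma Bb_abs_le (hBbsymm : ∀ x y : Fin g → ℝ, Bb x y = Bb y x)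
    (hBbpos : ∀ x : Fin g → ℝ, x ≠ 0 → 0 < Bb x x) (x y : Fin g → ℝ) :
    |Bb x y| ≤ Real.sqrt (Bb x x) * Real.sqrt (Bb y y) := by
  have hcs := Bb_cs Bb hBbsymm hBbpos x y
  have ha := Real.sqrt_nonneg (Bb x x)
  have hb := Real.sqrt_nonneg (Bb y y)
  have ha2 := Real.sq_sqrt (Bb_nonneg Bb hBbpos x)
  have hb2 := Real.sq_sqrt (Bb_nonneg Bb hBbpos y)
  rw [abs_le]
  constructor <;> nlinarith [mul_nonneg ha hb]

lemma VS_basis_mem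
    (hBbsymm : ∀ x y : Fin g → ℝ, Bb x y = Bb y x)
    (hBbpos : ∀ x : Fin g → ℝ, x ≠ 0 → 0 < Bb x x)
    (hBbcompat : ∀ (y : Y) (x : Fin g → ℤ), Bb (iota (y : Fin g → ℤ)) (iota x) = (B y x : ℝ))
    (hBpos : ∀ y : Y, y ≠ 0 → 0 < B y (y : Fin g → ℤ))
    (i : Fin g) (t : ℝ)
    (ht : Real.sqrt (Bb (Pi.single i 1) (Pi.single i 1)) ≤ t) :
    (Pi.single i (1:ℝ)) ∈ VS Bb φ t := by
  intro u
  set y := φ u with hy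
  rcases eq_or_ne y 0 with h0 | h0
  · rw [h0]
    simp only [ZeroMemClass.coe_zero, iota_zero, map_zero, LinearMap.zero_apply]
    simp
  · have hyY : ((y : Fin g → ℤ)) ∈ Y := y.2
    have hge1 : (1:ℝ) ≤ Bb (iota (y : Fin g → ℤ)) (iota (y : Fin g → ℤ)) := by
      rw [hBbcompat y (y : Fin g → ℤ)]
      have := hBpos y h0
      exact_mod_cast this
    have habs := Bb_abs_le Bb hBbsymm hBbpos (Pi.single i 1) (iota (y : Fin g → ℤ))
    set a := Real.sqrt (Bb (Pi.single i (1:ℝ)) (Pi.single i 1)) with hadef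
    set b := Real.sqrt (Bb (iota (y : Fin g → ℤ)) (iota (y : Fin g → ℤ))) with hbdef
    have hb2 : b^2 = Bb (iota (y : Fin g → ℤ)) (iota (y : Fin g → ℤ)) :=
      Real.sq_sqrt (Bb_nonneg Bb hBbpos _)
    have hbnn : 0 ≤ b := Real.sqrt_nonneg _
    have hann : 0 ≤ a := Real.sqrt_nonneg _
    have hb1 : 1 ≤ b := by nlinarith
    calc Bb (Pi.single i (1:ℝ)) (iota (y : Fin g → ℤ)) ≤ |Bb (Pi.single i (1:ℝ)) (iota (y : Fin g → ℤ))| := le_abs_self _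
      _ ≤ a * b := habs
      _ ≤ t * (b * b) := by
          have htnn : 0 ≤ t := le_trans hann ht
          have h1' : a * b ≤ t * b := mul_le_mul_of_nonneg_right ht hbnn
          nlinarith [mul_nonneg (mul_nonneg htnn hbnn) (sub_nonneg.mpr hb1)]
      _ = t * Bb (iota (y : Fin g → ℤ)) (iota (y : Fin g → ℤ)) := by rw [← hb2]; ring_nf
end Chunk5

section Extreme
variable {g : ℕ} {Y : Submodule ℤ (Fin g → ℤ)}

set_option maxHeartbeats 1000000 in
lemma extreme_integral
    (B : Y →ₗ[ℤ] (Fin g → ℤ) →ₗ[ℤ] ℤ)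
    (Bb : (Fin g → ℝ) →ₗ[ℝ] (Fin g → ℝ) →ₗ[ℝ] ℝ)
    (φ : ((Fin g → ℤ) →ₗ[ℤ] ℤ) → Y)
    (hBbsymm : ∀ x y : Fin g → ℝ, Bb x y = Bb y x)
    (hBbpos : ∀ x : Fin g → ℝ, x ≠ 0 → 0 < Bb x x)
    (hBbcompat : ∀ (y : Y) (x : Fin g → ℤ), Bb (iota (y : Fin g → ℤ)) (iota x) = (B y x : ℝ))
    (r₀ : ℝ) (hr₀ : 0 ≤ r₀)
    (S : Set (Fin g → ℤ)) (hS : S.Finite)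
    (hSsub : ∀ y : Fin g → ℤ, Bb (iota y) (iota y) ≤ (Real.sqrt r₀ + 1)^2 → y ∈ S)
    (Mat : (Fin g → (Fin g → ℤ)) → Matrix (Fin g) (Fin g) ℤ)
    (hMat : ∀ (τ : Fin g → (Fin g → ℤ)) (hτ : ∀ k, τ k ∈ Y) (k j : Fin g),
      Mat τ k j = B ⟨τ k, hτ k⟩ (Pi.single j 1))
    (D : ℤ)
    (hDdvd : ∀ τ ∈ Fintype.piFinset (fun _ : Fin g => hS.toFinset),
      (Mat τ).det ≠ 0 → (Mat τ).det ∣ D)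
    (t : ℕ) (htD : D ∣ (t : ℤ)) (ht1 : 1 ≤ t)
    (hbound : ∀ z ∈ VS Bb φ (t:ℝ), Bb z z ≤ (t:ℝ)^2 * r₀)
    (x : Fin g → ℝ) (hx : x ∈ Set.extremePoints ℝ (VS Bb φ (t:ℝ))) :
    x ∈ Set.range (iota (g := g)) := by
  classical
  obtain ⟨hxV, hxext⟩ := hx
  have htR : (1:ℝ) ≤ (t:ℝ) := by exact_mod_cast ht1
  have htpos : (0:ℝ) < t := by linarith
  set A : Set ((Fin g → ℤ) →ₗ[ℤ] ℤ) :=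
    {u | Bb x (iota ((φ u : Y) : Fin g → ℤ)) =
      (t:ℝ) * Bb (iota ((φ u : Y) : Fin g → ℤ)) (iota ((φ u : Y) : Fin g → ℤ))} with hA
  set Gen : Set (Fin g → ℝ) := {w | ∃ u ∈ A, w = iota ((φ u : Y) : Fin g → ℤ)} with hGen
  set W : Submodule ℝ (Fin g → ℝ) := Submodule.span ℝ Gen with hW
  have hexp : ∀ z w : Fin g → ℝ, Bb z w = ∑ j, w j * Bb z (Pi.single j 1) := by
    intro z w
    rw [LinearMap.pi_apply_eq_sum_univ (Bb z) w]
    exact Finset.sum_congr rfl fun j _ => by rw [hsingle_eq j, smul_eq_mul]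
  -- Step 1 : the active constraints span everything
  have hWtop : W = ⊤ := by
    by_contra hWne
    have hWlt : W < ⊤ := lt_top_iff_ne_top.mpr hWne
    obtain ⟨f, hf0, hfbot⟩ := Submodule.exists_dual_map_eq_bot_of_lt_top hWlt inferInstance
    have hinj : Function.Injective Bb := by
      intro a b hab
      by_contra hne
      have h0 : a - b ≠ 0 := sub_ne_zero.mpr hne
      have hz : Bb (a - b) (a - b) = 0 := by
        rw [show Bb (a - b) = Bb a - Bb b from map_sub Bb a b, hab, sub_self,
          LinearMap.zero_apply]
      exact (hBbpos _ h0).ne' hz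
    have hsurj : Function.Surjective Bb := by
      have hfr : Module.finrank ℝ (Fin g → ℝ) =
          Module.finrank ℝ ((Fin g → ℝ) →ₗ[ℝ] ℝ) := (Subspace.dual_finrank_eq).symm
      exact (LinearMap.injective_iff_surjective_of_finrank_eq_finrank hfr).mp hinj
    obtain ⟨v₀, hv₀⟩ := hsurj f
    have hv₀ne : v₀ ≠ 0 := by rintro rfl; rw [map_zero] at hv₀; exact hf0 hv₀.symm
    have hv₀W : ∀ w ∈ W, Bb v₀ w = 0 := by
      intro w hw
      have hmem : f w ∈ W.map f := Submodule.mem_map_of_mem hw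
      rw [hfbot, Submodule.mem_bot] at hmem
      show (Bb v₀) w = 0
      rw [hv₀]; exact hmem
    set nv := Real.sqrt (Bb v₀ v₀) with hnv
    have hnvpos : 0 < nv := Real.sqrt_pos.mpr (hBbpos v₀ hv₀ne)
    set v := nv⁻¹ • v₀ with hv
    have hvne : v ≠ 0 := smul_ne_zero (inv_ne_zero hnvpos.ne') hv₀ne
    have hvW : ∀ w ∈ W, Bb v w = 0 := by
      intro w hw
      have : Bb v w = nv⁻¹ * Bb v₀ w := by
        rw [hv]
        simp only [map_smul, LinearMap.smul_apply, smul_eq_mul]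
      rw [this, hv₀W w hw, mul_zero]
    have hvv : Bb v v = 1 := by
      have hsq : Bb v₀ v₀ = nv * nv := (Real.mul_self_sqrt (Bb_nonneg Bb hBbpos v₀)).symm
      have hrw : Bb v v = nv⁻¹ * (nv⁻¹ * Bb v₀ v₀) := by
        rw [hv]
        simp only [map_smul, LinearMap.smul_apply, smul_eq_mul]
      rw [hrw, hsq]
      field_simp
    set s : Finset (Fin g → ℤ) := hS.toFinset.filter
      (fun y => Bb x (iota y) < (t:ℝ) * Bb (iota y) (iota y)) with hs
    set q : (Fin g → ℤ) → ℝ := fun y =>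
      ((t:ℝ) * Bb (iota y) (iota y) - Bb x (iota y)) / (|Bb v (iota y)| + 1) with hq
    set E : Finset ℝ := insert (1:ℝ) (s.image q) with hE
    have hEne : E.Nonempty := ⟨1, Finset.mem_insert_self _ _⟩
    set ε : ℝ := E.min' hEne with hεdef
    have hε1 : ε ≤ 1 := Finset.min'_le _ _ (Finset.mem_insert_self _ _)
    have hεq : ∀ y ∈ s, ε ≤ q y := fun y hy =>
      Finset.min'_le _ _ (Finset.mem_insert_of_mem (Finset.mem_image_of_mem q hy))
    have hεpos : 0 < ε := by
      rw [hεdef, Finset.lt_min'_iff]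
      intro b hb
      rw [hE, Finset.mem_insert] at hb
      rcases hb with rfl | hb
      · norm_num
      · obtain ⟨y, hy, rfl⟩ := Finset.mem_image.mp hb
        rw [hs, Finset.mem_filter] at hy
        have hnum : 0 < (t:ℝ) * Bb (iota y) (iota y) - Bb x (iota y) := by linarith [hy.2]
        have hden : 0 < |Bb v (iota y)| + 1 := by positivity
        exact div_pos hnum hden
    have hmem : ∀ σ : ℝ, |σ| ≤ ε → x + σ • v ∈ VS Bb φ (t:ℝ) := by
      intro σ hσ u
      set y := ((φ u : Y) : Fin g → ℤ) with hy
      have hyV : Bb x (iota y) ≤ (t:ℝ) * Bb (iota y) (iota y) := hxV u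
      have hBeval : Bb (x + σ • v) (iota y) = Bb x (iota y) + σ * Bb v (iota y) := by
        simp only [map_add, map_smul, LinearMap.add_apply, LinearMap.smul_apply, smul_eq_mul]
      rw [hBeval]
      by_cases hu : u ∈ A
      · have h0 : Bb v (iota y) = 0 := by
          apply hvW
          rw [hW]
          exact Submodule.subset_span ⟨u, hu, rfl⟩
        rw [h0, mul_zero, add_zero]
        exact hyV
      · have hne : Bb x (iota y) ≠ (t:ℝ) * Bb (iota y) (iota y) := by
          intro h; exact hu (by rw [hA]; exact h)
        have hstrict : Bb x (iota y) < (t:ℝ) * Bb (iota y) (iota y) :=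
          lt_of_le_of_ne hyV hne
        have hσnn : 0 ≤ ε := le_trans (abs_nonneg σ) hσ
        have h3 : σ * Bb v (iota y) ≤ ε * |Bb v (iota y)| := by
          calc σ * Bb v (iota y) ≤ |σ * Bb v (iota y)| := le_abs_self _
            _ = |σ| * |Bb v (iota y)| := abs_mul _ _
            _ ≤ ε * |Bb v (iota y)| := mul_le_mul_of_nonneg_right hσ (abs_nonneg _)
        by_cases hyS : y ∈ S
        · have hys : y ∈ s := by
            rw [hs, Finset.mem_filter]; exact ⟨hS.mem_toFinset.mpr hyS, hstrict⟩
          have h1 := hεq y hys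
          have hden : 0 < |Bb v (iota y)| + 1 := by positivity
          rw [hq, le_div_iff₀ hden] at h1
          nlinarith [abs_nonneg (Bb v (iota y))]
        · have hbig : (Real.sqrt r₀ + 1)^2 < Bb (iota y) (iota y) := by
            by_contra hle; push_neg at hle; exact hyS (hSsub y hle)
          set β := Bb (iota y) (iota y) with hβ
          set sβ := Real.sqrt β with hsβ
          have hβnn : 0 ≤ β := Bb_nonneg Bb hBbpos _
          have hsβ2 : sβ^2 = β := Real.sq_sqrt hβnn
          have hsβnn : 0 ≤ sβ := Real.sqrt_nonneg _
          have hsβge : Real.sqrt r₀ + 1 ≤ sβ := by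
            have h5 := Real.sqrt_le_sqrt hbig.le
            rwa [Real.sqrt_sq (by positivity)] at h5
          have hxb : Bb x (iota y) ≤ (t:ℝ) * Real.sqrt r₀ * sβ := by
            have habs := Bb_abs_le Bb hBbsymm hBbpos x (iota y)
            have hxx : Real.sqrt (Bb x x) ≤ (t:ℝ) * Real.sqrt r₀ := by
              have h5 : Bb x x ≤ (t:ℝ)^2 * r₀ := hbound x hxV
              have h6 := Real.sqrt_le_sqrt h5
              rwa [Real.sqrt_mul (by positivity) r₀, Real.sqrt_sq htpos.le] at h6
            calc Bb x (iota y) ≤ |Bb x (iota y)| := le_abs_self _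
              _ ≤ Real.sqrt (Bb x x) * sβ := habs
              _ ≤ (t:ℝ) * Real.sqrt r₀ * sβ := mul_le_mul_of_nonneg_right hxx hsβnn
          have hvb : |Bb v (iota y)| ≤ sβ := by
            have habs := Bb_abs_le Bb hBbsymm hBbpos v (iota y)
            rwa [hvv, Real.sqrt_one, one_mul] at habs
          have h4 : σ * Bb v (iota y) ≤ ε * sβ := by
            calc σ * Bb v (iota y) ≤ ε * |Bb v (iota y)| := h3
              _ ≤ ε * sβ := mul_le_mul_of_nonneg_left hvb hσnn
          have hr₀s := Real.sqrt_nonneg r₀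
          have e1 : ε * sβ ≤ sβ := mul_le_of_le_one_left hsβnn hε1
          have hp1 : ((t:ℝ)*sβ)*(Real.sqrt r₀+1) ≤ ((t:ℝ)*sβ)*sβ :=
            mul_le_mul_of_nonneg_left hsβge (mul_nonneg htpos.le hsβnn)
          have hp2 : 0 ≤ ((t:ℝ)-1)*sβ := mul_nonneg (by linarith) hsβnn
          have hβeq : (t:ℝ)*β = (t:ℝ)*(sβ*sβ) := by rw [← hsβ2]; ring
          linarith [hxb, h4, e1, hp1, hp2, hβeq]
    have h1 : x - ε • v ∈ VS Bb φ (t:ℝ) := by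
      have h := hmem (-ε) (by rw [abs_neg, abs_of_pos hεpos])
      rw [neg_smul] at h
      rwa [sub_eq_add_neg]
    have h2 : x + ε • v ∈ VS Bb φ (t:ℝ) := hmem ε (by rw [abs_of_pos hεpos])
    have hseg : x ∈ openSegment ℝ (x - ε • v) (x + ε • v) := by
      refine ⟨1/2, 1/2, by norm_num, by norm_num, by norm_num, ?_⟩
      module
    have hcontr := hxext h1 h2 hseg
    have hεv : ε • v = 0 := by
      have h := hcontr
      rwa [sub_eq_self] at h
    rcases smul_eq_zero.mp hεv with h | h
    · exact hεpos.ne' h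
    · exact hvne h
  -- Step 2 : extract a basis, solve the integer linear system
  have hGenspan : Submodule.span ℝ Gen = ⊤ := by rw [← hW]; exact hWtop
  obtain ⟨bs, hbsub, hbspan, hbind⟩ := exists_linearIndependent ℝ Gen
  rw [hGenspan] at hbspan
  have hbasis : Module.Basis bs ℝ (Fin g → ℝ) :=
    Module.Basis.mk hbind (by rw [Subtype.range_coe, hbspan])
  haveI : Fintype bs := FiniteDimensional.fintypeBasisIndex hbasis
  have hcard : Fintype.card bs = g := by
    have h1 := Module.finrank_eq_card_basis hbasis
    rw [Module.finrank_pi ℝ, Fintype.card_fin] at h1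
    exact h1.symm
  set e : Fin g ≃ bs := (Fintype.equivFinOfCardEq hcard).symm with he
  have hchoice : ∀ k : Fin g, ∃ u, u ∈ A ∧ iota ((φ u : Y) : Fin g → ℤ) = (e k : Fin g → ℝ) := by
    intro k
    have hmem : ((e k : Fin g → ℝ)) ∈ Gen := hbsub (e k).2
    rw [hGen] at hmem
    obtain ⟨u, hu, huw⟩ := hmem
    exact ⟨u, hu, huw.symm⟩
  choose uu huA huw using hchoice
  set τ : Fin g → (Fin g → ℤ) := fun k => ((φ (uu k) : Y) : Fin g → ℤ) with hτ
  have hτY : ∀ k, τ k ∈ Y := fun k => (φ (uu k)).2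
  have hact : ∀ k, Bb x (iota (τ k)) = (t:ℝ) * Bb (iota (τ k)) (iota (τ k)) := fun k => huA k
  have hτS : ∀ k, τ k ∈ S := by
    intro k
    apply hSsub
    set β := Bb (iota (τ k)) (iota (τ k)) with hβ
    have hβnn : 0 ≤ β := Bb_nonneg Bb hBbpos _
    have hβr : β ≤ r₀ := by
      have hcs := Bb_cs Bb hBbsymm hBbpos x (iota (τ k))
      have hbx : Bb x x ≤ (t:ℝ)^2*r₀ := hbound x hxV
      have h1 : ((t:ℝ) * β)^2 ≤ (t:ℝ)^2 * r₀ * β := by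
        rw [← hβ] at hcs
        rw [← hact k]
        nlinarith [hcs, hbx, hβnn]
      rcases le_or_gt β r₀ with h | h
      · exact h
      · exfalso
        have hβpos : 0 < β := lt_of_le_of_lt hr₀ h
        nlinarith [mul_pos (mul_pos (mul_pos htpos htpos) hβpos) (sub_pos.mpr h)]
    nlinarith [Real.sq_sqrt hr₀, Real.sqrt_nonneg r₀]
  have hτmem : τ ∈ Fintype.piFinset (fun _ : Fin g => hS.toFinset) := by
    rw [Fintype.mem_piFinset]; intro k; exact hS.mem_toFinset.mpr (hτS k)
  set M := Mat τ with hM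
  set Rm : Matrix (Fin g) (Fin g) ℝ := M.map ⇑(Int.castRingHom ℝ) with hRm
  have hRmval : ∀ k j, Rm k j = Bb (iota (τ k)) (Pi.single j 1) := by
    intro k j
    rw [hRm, Matrix.map_apply, eq_intCast, hM, hMat τ hτY k j,
      ← hBbcompat ⟨τ k, hτY k⟩ (Pi.single j 1), iota_single]
  set cz : Fin g → ℤ := fun k => B ⟨τ k, hτY k⟩ (τ k) with hcz
  have hczR : ∀ k, (cz k : ℝ) = Bb (iota (τ k)) (iota (τ k)) := fun k => (hBbcompat _ _).symm
  have hsys : Rm.mulVec x = fun k => (t:ℝ) * (cz k : ℝ) := by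
    funext k
    have h2 : Rm.mulVec x k = Bb (iota (τ k)) x := by
      rw [Matrix.mulVec, dotProduct, hexp (iota (τ k)) x]
      exact Finset.sum_congr rfl fun j _ => by rw [hRmval k j]; ring
    rw [h2, ← hBbsymm x (iota (τ k)), hact k, hczR]
  have hdet : M.det ≠ 0 := by
    have hker : ∀ c : Fin g → ℝ, Matrix.vecMul c Rm = 0 → c = 0 := by
      intro c hc
      set z : Fin g → ℝ := ∑ k, c k • iota (τ k) with hz
      have hzj : ∀ j, Bb z (Pi.single j 1) = 0 := by
        intro j
        have hcj : Matrix.vecMul c Rm j = 0 := by rw [hc]; rfl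
        rw [Matrix.vecMul, dotProduct] at hcj
        rw [hz, map_sum]
        simp only [LinearMap.sum_apply, map_smul, LinearMap.smul_apply, smul_eq_mul]
        rw [← hcj]
        exact Finset.sum_congr rfl fun k _ => by rw [hRmval k j]
      have hzz : Bb z z = 0 := by
        rw [hexp z z]
        simp only [hzj, mul_zero, Finset.sum_const_zero]
      have hz0 : z = 0 := by
        by_contra h0; exact absurd hzz (ne_of_gt (hBbpos z h0))
      have hind2 : LinearIndependent ℝ (fun k : Fin g => (e k : Fin g → ℝ)) :=
        hbind.comp e e.injective
      have hzero : ∑ k, c k • (e k : Fin g → ℝ) = 0 := by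
        rw [← hz0, hz]
        exact Finset.sum_congr rfl fun k _ => by rw [huw k]
      have hc0 := Fintype.linearIndependent_iff.mp hind2 c hzero
      funext k; exact hc0 k
    have hinj : Function.Injective Rm.vecMul := by
      intro c1 c2 h
      have h' : Matrix.vecMul c1 Rm = Matrix.vecMul c2 Rm := h
      have h0 := hker (c1 - c2) (by rw [Matrix.sub_vecMul, h', sub_self])
      exact sub_eq_zero.mp h0
    have hunit : IsUnit Rm := Matrix.vecMul_injective_iff_isUnit.mp hinj
    have hdetR : Rm.det ≠ 0 :=
      isUnit_iff_ne_zero.mp ((Matrix.isUnit_iff_isUnit_det _).mp hunit)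
    have hcast : (M.det : ℝ) = Rm.det := by
      rw [hRm, ← RingHom.mapMatrix_apply, ← RingHom.map_det, eq_intCast]
    intro h0
    apply hdetR
    rw [← hcast, h0, Int.cast_zero]
  have hdvdt : (M.det : ℤ) ∣ (t:ℤ) := (hDdvd τ hτmem hdet).trans htD
  obtain ⟨qz, hqz⟩ := hdvdt
  set wz : Fin g → ℤ := M.adjugate.mulVec cz with hwz
  have hMdR : (M.det : ℝ) ≠ 0 := Int.cast_ne_zero.mpr hdet
  have hfinal : (M.det : ℝ) • x = (t:ℝ) • iota wz := by
    have h1 : Rm.adjugate = M.adjugate.map ⇑(Int.castRingHom ℝ) := by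
      rw [hRm, ← RingHom.mapMatrix_apply, ← RingHom.mapMatrix_apply,
        RingHom.map_adjugate]
    have h2 : Rm.adjugate.mulVec (Rm.mulVec x) = (M.det : ℝ) • x := by
      rw [Matrix.mulVec_mulVec, Matrix.adjugate_mul, Matrix.smul_mulVec,
        Matrix.one_mulVec]
      congr 1
      rw [hRm, ← RingHom.mapMatrix_apply, ← RingHom.map_det, eq_intCast]
    rw [← h2, hsys, h1]
    funext i
    simp only [Matrix.mulVec, dotProduct, Matrix.map_apply, Pi.smul_apply,
      smul_eq_mul, hwz, iota, eq_intCast]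
    push_cast
    rw [Finset.mul_sum]
    exact Finset.sum_congr rfl fun k _ => by ring
  have hcast2 : (t:ℝ) = (M.det : ℝ) * (qz : ℝ) := by exact_mod_cast hqz
  have hxeq : x = iota (qz • wz) := by
    apply smul_right_injective (Fin g → ℝ) hMdR
    show (M.det : ℝ) • x = (M.det : ℝ) • iota (qz • wz)
    rw [hfinal, iota_zsmul, smul_smul, ← hcast2]
  exact ⟨qz • wz, hxeq.symm⟩

end Extreme

set_option maxHeartbeats 1000000 in
/-- there is `ℓ₀ > 0` such that `Σ_{ℓ₀ℓ}(0)` is integral for every `ℓ > 0`. -/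
theorem statement5
    (g : ℕ) (hg : 1 ≤ g)
    (Y : Submodule ℤ (Fin g → ℤ))
    (hYfin : Y.toAddSubgroup.index ≠ 0)
    (B : Y →ₗ[ℤ] (Fin g → ℤ) →ₗ[ℤ] ℤ)
    (hBsymm : ∀ y z : Y, B y (z : Fin g → ℤ) = B z (y : Fin g → ℤ))
    (hBpos : ∀ y : Y, y ≠ 0 → 0 < B y (y : Fin g → ℤ))
    (N : ℕ) (hN : N = (LinearMap.range B).toAddSubgroup.index) (hNpos : 0 < N)
    (φ : ((Fin g → ℤ) →ₗ[ℤ] ℤ) → Y)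
    (hφ : ∀ u : (Fin g → ℤ) →ₗ[ℤ] ℤ, B (φ u) = (N : ℤ) • u)
    (Bb : (Fin g → ℝ) →ₗ[ℝ] (Fin g → ℝ) →ₗ[ℝ] ℝ)
    (hBbsymm : ∀ x y : Fin g → ℝ, Bb x y = Bb y x)
    (hBbpos : ∀ x : Fin g → ℝ, x ≠ 0 → 0 < Bb x x)
    (hBbcompat : ∀ (y : Y) (x : Fin g → ℤ), Bb (iota (y : Fin g → ℤ)) (iota x) = (B y x : ℝ)) :
    ∃ ℓ₀ : ℕ, 0 < ℓ₀ ∧ ∀ ℓ : ℕ, 0 < ℓ → IsIntegral (VorP Bb φ (ℓ₀ * ℓ) 0) := by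
  classical
  have hB0 : ∀ y : Y, B y = 0 → y = 0 := by
    intro y hy
    by_contra h
    have h1 := hBpos y h
    rw [hy] at h1
    simp at h1
  have hφ0Y : φ 0 = 0 := hB0 _ (by rw [hφ 0, smul_zero])
  have hφ0 : ((φ 0 : Y) : Fin g → ℤ) = 0 := by rw [hφ0Y]; rfl
  have hφnegY : ∀ u, φ (-u) = -φ u := by
    intro u
    have hsum : φ (-u) + φ u = 0 := by
      apply hB0
      rw [map_add, hφ (-u), hφ u, smul_neg, neg_add_cancel]
    exact eq_neg_of_add_eq_zero_left hsum
  have hφneg : ∀ u, ((φ (-u) : Y) : Fin g → ℤ) = -((φ u : Y) : Fin g → ℤ) := by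
    intro u; rw [hφnegY u]; rfl
  obtain ⟨m, hm, Mc, hMc, hmM⟩ := Bb_bounds Bb hg hBbpos
  obtain ⟨R, hR, hRbound⟩ := VS_coord_bound Bb φ B N hBbsymm hBbcompat hBbpos hφ hφneg hNpos
  set r₀ : ℝ := Mc * R ^ 2 with hr₀def
  have hr₀ : 0 ≤ r₀ := by positivity
  set ρ : ℝ := Real.sqrt ((Real.sqrt r₀ + 1) ^ 2 / m) with hρdef
  set S : Set (Fin g → ℤ) := {y | ∀ i, |(y i : ℝ)| ≤ ρ} with hSdef
  have hS : S.Finite := lattice_finite ρ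
  have hSsub : ∀ y : Fin g → ℤ, Bb (iota y) (iota y) ≤ (Real.sqrt r₀ + 1) ^ 2 → y ∈ S := by
    intro y hy i
    have h1 : m * ‖iota y‖ ^ 2 ≤ (Real.sqrt r₀ + 1) ^ 2 := le_trans (hmM (iota y)).1 hy
    have h2 : ‖iota y‖ ^ 2 ≤ (Real.sqrt r₀ + 1) ^ 2 / m := by
      rw [le_div_iff₀ hm]; nlinarith
    have h3 : ‖iota y‖ ≤ ρ := by
      rw [hρdef]
      have h4 := Real.sqrt_le_sqrt h2
      rwa [Real.sqrt_sq (norm_nonneg _)] at h4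
    calc |(y i : ℝ)| = ‖iota y i‖ := rfl
      _ ≤ ‖iota y‖ := norm_le_pi_norm _ i
      _ ≤ ρ := h3
  set Mat : (Fin g → (Fin g → ℤ)) → Matrix (Fin g) (Fin g) ℤ :=
    fun τ => Matrix.of fun k j =>
      if h : τ k ∈ Y then B ⟨τ k, h⟩ (Pi.single j 1) else 0 with hMatdef
  have hMat : ∀ (τ : Fin g → (Fin g → ℤ)) (hτ : ∀ k, τ k ∈ Y) (k j : Fin g),
      Mat τ k j = B ⟨τ k, hτ k⟩ (Pi.single j 1) := by
    intro τ hτ k j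
    rw [hMatdef]
    simp only [Matrix.of_apply]
    rw [dif_pos (hτ k)]
  set Dn : ℕ := ∏ τ ∈ Fintype.piFinset (fun _ : Fin g => hS.toFinset),
    max 1 (Mat τ).det.natAbs with hDn
  have hDnpos : 0 < Dn := Finset.prod_pos fun τ _ => lt_of_lt_of_le one_pos (le_max_left _ _)
  have hDdvd : ∀ τ ∈ Fintype.piFinset (fun _ : Fin g => hS.toFinset),
      (Mat τ).det ≠ 0 → (Mat τ).det ∣ ((Dn : ℕ) : ℤ) := by
    intro τ hτ hdet
    have h1 : (Mat τ).det.natAbs ∣ Dn := by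
      have h2 : max 1 (Mat τ).det.natAbs = (Mat τ).det.natAbs := by
        rw [max_eq_right]
        exact Nat.one_le_iff_ne_zero.mpr (Int.natAbs_ne_zero.mpr hdet)
      rw [hDn, ← h2]
      exact Finset.dvd_prod_of_mem _ hτ
    exact Int.natAbs_dvd.mp (Int.natCast_dvd_natCast.mpr h1)
  set c₀ : ℝ := ∑ i, Real.sqrt (Bb (Pi.single i 1) (Pi.single i 1)) with hc₀
  have hc₀nn : 0 ≤ c₀ := Finset.sum_nonneg fun i _ => Real.sqrt_nonneg _
  set K₀ : ℕ := ⌈c₀⌉₊ + 1 with hK₀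
  have hK₀pos : 0 < K₀ := by omega
  refine ⟨Dn * K₀, by positivity, fun ℓ hℓ => ?_⟩
  set t : ℕ := Dn * K₀ * ℓ with htdef
  have htpos : 0 < t := by positivity
  have ht1 : 1 ≤ t := htpos
  have htR1 : (1:ℝ) ≤ (t:ℝ) := by exact_mod_cast ht1
  have htDn : Dn ∣ t := ⟨K₀ * ℓ, by rw [htdef]; ring⟩
  have htD : ((Dn : ℕ) : ℤ) ∣ (t : ℤ) := Int.natCast_dvd_natCast.mpr htDn
  have hc₀t : c₀ ≤ (t : ℝ) := by
    have h1 : c₀ ≤ (⌈c₀⌉₊ : ℝ) := Nat.le_ceil c₀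
    have h3 : K₀ ≤ t := by
      rw [htdef]
      calc K₀ ≤ Dn * K₀ := Nat.le_mul_of_pos_left _ hDnpos
        _ ≤ Dn * K₀ * ℓ := Nat.le_mul_of_pos_right _ hℓ
    have h4 : (K₀ : ℝ) ≤ (t : ℝ) := by exact_mod_cast h3
    have h5 : ((⌈c₀⌉₊ : ℕ) : ℝ) + 1 = (K₀ : ℝ) := by rw [hK₀]; push_cast; ring
    linarith
  rw [VorP_eq_VS Bb φ hBbsymm hBbpos hφ0 t htpos]
  set V := VS Bb φ (t : ℝ) with hVdef
  have hnorm : ∀ x ∈ V, ‖x‖ ≤ (t : ℝ) * R := by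
    intro x hx
    rw [pi_norm_le_iff_of_nonneg (mul_nonneg (Nat.cast_nonneg t) hR.le)]
    intro i
    rw [Real.norm_eq_abs]
    exact hRbound (t : ℝ) (Nat.cast_nonneg t) x hx i
  have hbounded : Bornology.IsBounded V := by
    apply (Metric.isBounded_closedBall (x := (0 : Fin g → ℝ)) (r := (t : ℝ) * R)).subset
    intro x hx
    rw [Metric.mem_closedBall, dist_zero_right]
    exact hnorm x hx
  have hbB : ∀ z ∈ V, Bb z z ≤ (t : ℝ) ^ 2 * r₀ := by
    intro z hz
    have h1 := (hmM z).2
    have h2 : ‖z‖ ^ 2 ≤ ((t : ℝ) * R) ^ 2 := by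
      have h6 := hnorm z hz
      nlinarith [norm_nonneg z, mul_nonneg (Nat.cast_nonneg t : (0:ℝ) ≤ t) hR.le]
    calc Bb z z ≤ Mc * ‖z‖ ^ 2 := h1
      _ ≤ Mc * ((t : ℝ) * R) ^ 2 := by nlinarith [hMc]
      _ = (t : ℝ) ^ 2 * r₀ := by rw [hr₀def]; ring
  have hclosed := VS_closed Bb φ (t : ℝ)
  have hconvex := VS_convex Bb φ (t : ℝ)
  have hcompact : IsCompact V := Metric.isCompact_of_isClosed_isBounded hclosed hbounded
  have hfin : (V ∩ Set.range (iota (g := g))).Finite := by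
    have himg : V ∩ Set.range (iota (g := g)) ⊆
        iota '' {y : Fin g → ℤ | ∀ i, |(y i : ℝ)| ≤ (t : ℝ) * R} := by
      rintro p ⟨hp, y, rfl⟩
      exact Set.mem_image_of_mem _ (fun i => hRbound (t : ℝ) (Nat.cast_nonneg t) (iota y) hp i)
    exact ((lattice_finite ((t : ℝ) * R)).image iota).subset himg
  have hext : Set.extremePoints ℝ V ⊆ V ∩ Set.range (iota (g := g)) := by
    intro x hx
    refine ⟨extremePoints_subset hx, ?_⟩
    exact extreme_integral B Bb φ hBbsymm hBbpos hBbcompat r₀ hr₀ S hS hSsub Mat hMat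
      ((Dn : ℕ) : ℤ) hDdvd t htD ht1 hbB x hx
  refine ⟨hbounded, ?_, ?_, ?_, ?_⟩
  · apply Set.Subset.antisymm
    · have hKM := closure_convexHull_extremePoints hcompact hconvex
      calc V = closure (convexHull ℝ (Set.extremePoints ℝ V)) := hKM.symm
        _ ⊆ closure (convexHull ℝ (V ∩ Set.range (iota (g := g)))) :=
            closure_mono (convexHull_mono hext)
        _ = convexHull ℝ (V ∩ Set.range (iota (g := g))) :=
            (hfin.isClosed_convexHull ℝ).closure_eq
    · exact convexHull_min Set.inter_subset_left hconvex
  · exact VS_symm Bb φ hφneg (t : ℝ)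
  · exact VS_zero_mem Bb φ hBbpos (t : ℝ) (Nat.cast_nonneg t)
  · refine ⟨Pi.basisFun ℤ (Fin g), fun i => ?_⟩
    rw [Pi.basisFun_apply, iota_single]
    apply VS_basis_mem Bb φ B hBbsymm hBbpos hBbcompat hBpos i
    calc Real.sqrt (Bb (Pi.single i 1) (Pi.single i 1)) ≤ c₀ :=
        Finset.single_le_sum (f := fun j => Real.sqrt (Bb (Pi.single j 1) (Pi.single j 1)))
          (fun j _ => Real.sqrt_nonneg _) (Finset.mem_univ i)
      _ ≤ (t : ℝ) := hc₀t


end NFC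
end

section
/- For every γ ∈ Σ_ℓ and z ∈ X^∨ one has E_ℓ(z) + z(γ) ≥ 0, and E_ℓ(z) + z(γ) = 0 if and only if γ + 2ℓφ(z) ∈ Σ_ℓ. -/
open scoped BigOperators Pointwise

namespace NFC

/-- for `γ ∈ Σ_ℓ` and `z ∈ X^∨`, `E_ℓ(z) + z(γ) ≥ 0`, with
`E_ℓ(z) + z(γ) = 0` iff `γ + 2ℓφ(z) ∈ Σ_ℓ`. -/
theorem statement6
    (g : ℕ) (hg : 1 ≤ g)
    (Y : Submodule ℤ (Fin g → ℤ))
    (hYfin : Y.toAddSubgroup.index ≠ 0)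
    (B : Y →ₗ[ℤ] (Fin g → ℤ) →ₗ[ℤ] ℤ)
    (hBsymm : ∀ y z : Y, B y (z : Fin g → ℤ) = B z (y : Fin g → ℤ))
    (hBpos : ∀ y : Y, y ≠ 0 → 0 < B y (y : Fin g → ℤ))
    (N : ℕ) (hN : N = (LinearMap.range B).toAddSubgroup.index) (hNpos : 0 < N)
    (φ : ((Fin g → ℤ) →ₗ[ℤ] ℤ) → Y)
    (hφ : ∀ u : (Fin g → ℤ) →ₗ[ℤ] ℤ, B (φ u) = (N : ℤ) • u)
    (ℓ : ℕ) (hℓ : 0 < ℓ) :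
    ∀ γ ∈ SigmaL φ ℓ, ∀ z : (Fin g → ℤ) →ₗ[ℤ] ℤ,
      0 ≤ El φ ℓ z + z γ ∧
      (El φ ℓ z + z γ = 0 ↔ γ + (2 * (ℓ : ℤ)) • ((φ z : Fin g → ℤ)) ∈ SigmaL φ ℓ) := by
  -- β = B is injective on Y
  have Binj : ∀ y y' : Y, B y = B y' → y = y' := by
    intro y y' h
    by_contra hne
    have hd : y - y' ≠ 0 := sub_ne_zero.mpr hne
    have := hBpos (y - y') hd
    rw [map_sub, h, sub_self] at this
    simp at this
  have φadd : ∀ u v : (Fin g → ℤ) →ₗ[ℤ] ℤ, φ (u + v) = φ u + φ v := by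
    intro u v
    apply Binj
    rw [map_add, hφ, hφ, hφ, smul_add]
  have φneg : ∀ u : (Fin g → ℤ) →ₗ[ℤ] ℤ, φ (-u) = -φ u := by
    intro u
    apply Binj
    rw [map_neg, hφ, hφ, smul_neg]
  -- symmetry: z (φ u) = u (φ z)
  have hsym : ∀ u v : (Fin g → ℤ) →ₗ[ℤ] ℤ, u ((φ v : Fin g → ℤ)) = v ((φ u : Fin g → ℤ)) := by
    intro u v
    have h1 : B (φ u) ((φ v : Fin g → ℤ)) = B (φ v) ((φ u : Fin g → ℤ)) := hBsymm _ _
    rw [hφ, hφ] at h1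
    simp only [LinearMap.smul_apply, smul_eq_mul] at h1
    have hN' : (N : ℤ) ≠ 0 := by exact_mod_cast hNpos.ne'
    exact mul_left_cancel₀ hN' h1
  intro γ hγ z
  refine ⟨hγ z, ?_, ?_⟩
  · -- forward
    intro h u
    have key := hγ (u + z)
    simp only [El, φadd, Submodule.coe_add, map_add, LinearMap.add_apply] at key ⊢
    have hs := hsym u z
    simp only [El] at h
    rw [map_smul, smul_eq_mul]
    nlinarith [key, h, hs]
  · -- backward
    intro h
    have h1 := hγ z
    have h2 := h (-z)
    simp only [El, φneg, Submodule.coe_neg, map_neg, LinearMap.neg_apply, map_add,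
      map_smul, smul_eq_mul, neg_neg] at h1 h2 ⊢
    linarith

end NFC
end

section
/- If γ, γ′ ∈ Σ_ℓ and z, z′ ∈ X^∨ satisfy γ + 2ℓφ(z) = γ′ + 2ℓφ(z′), then E_ℓ(z) + z(γ) = E_ℓ(z′) + z′(γ′); consequently D_ℓ(x) := E_ℓ(z) + z(γ), for any decomposition x = γ + 2ℓφ(z) with γ ∈ Σ_ℓ and z ∈ X^∨, is a well-defined function on X. -/
open scoped BigOperators Pointwise

namespace NFC

/-- the quantity `E_ℓ(z) + z(γ)` depends only on `γ + 2ℓφ(z)`, so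
`D_ℓ` is a well-defined function on `X`. -/
theorem statement7
    (g : ℕ) (hg : 1 ≤ g)
    (Y : Submodule ℤ (Fin g → ℤ))
    (hYfin : Y.toAddSubgroup.index ≠ 0)
    (B : Y →ₗ[ℤ] (Fin g → ℤ) →ₗ[ℤ] ℤ)
    (hBsymm : ∀ y z : Y, B y (z : Fin g → ℤ) = B z (y : Fin g → ℤ))
    (hBpos : ∀ y : Y, y ≠ 0 → 0 < B y (y : Fin g → ℤ))
    (N : ℕ) (hN : N = (LinearMap.range B).toAddSubgroup.index) (hNpos : 0 < N)
    (φ : ((Fin g → ℤ) →ₗ[ℤ] ℤ) → Y)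
    (hφ : ∀ u : (Fin g → ℤ) →ₗ[ℤ] ℤ, B (φ u) = (N : ℤ) • u)
    (ℓ : ℕ) (hℓ : 0 < ℓ) :
    (∀ γ ∈ SigmaL φ ℓ, ∀ γ' ∈ SigmaL φ ℓ, ∀ z z' : (Fin g → ℤ) →ₗ[ℤ] ℤ,
      γ + (2 * (ℓ : ℤ)) • ((φ z : Fin g → ℤ)) = γ' + (2 * (ℓ : ℤ)) • ((φ z' : Fin g → ℤ)) →
      El φ ℓ z + z γ = El φ ℓ z' + z' γ') ∧
    (∃ D : (Fin g → ℤ) → ℤ, ∀ γ ∈ SigmaL φ ℓ, ∀ z : (Fin g → ℤ) →ₗ[ℤ] ℤ,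
      D (γ + (2 * (ℓ : ℤ)) • ((φ z : Fin g → ℤ))) = El φ ℓ z + z γ) := by
  classical
  have hNne : (N : ℤ) ≠ 0 := by exact_mod_cast hNpos.ne'
  -- injectivity of B
  have Binj : ∀ y y' : Y, B y = B y' → y = y' := by
    intro y y' h
    by_contra hne
    have hne' : y - y' ≠ 0 := sub_ne_zero.mpr hne
    have hpos := hBpos _ hne'
    have hzero : B (y - y') ((y - y' : Y) : Fin g → ℤ) = 0 := by
      rw [map_sub, LinearMap.sub_apply, h]
      ring
    rw [hzero] at hpos
    exact lt_irrefl _ hpos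
  -- symmetry: u (φ v) = v (φ u)
  have hsymm : ∀ u v : (Fin g → ℤ) →ₗ[ℤ] ℤ,
      u ((φ v : Y) : Fin g → ℤ) = v ((φ u : Y) : Fin g → ℤ) := by
    intro u v
    have h1 : B (φ u) ((φ v : Y) : Fin g → ℤ)
        = (N : ℤ) * u ((φ v : Y) : Fin g → ℤ) := by
      rw [hφ]; simp [smul_eq_mul]
    have h2 : B (φ v) ((φ u : Y) : Fin g → ℤ)
        = (N : ℤ) * v ((φ u : Y) : Fin g → ℤ) := by
      rw [hφ]; simp [smul_eq_mul]
    have h3 := hBsymm (φ u) (φ v)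
    rw [h1, h2] at h3
    exact mul_left_cancel₀ hNne h3
  have key : ∀ γ ∈ SigmaL φ ℓ, ∀ γ' ∈ SigmaL φ ℓ, ∀ z z' : (Fin g → ℤ) →ₗ[ℤ] ℤ,
      γ + (2 * (ℓ : ℤ)) • ((φ z : Fin g → ℤ)) = γ' + (2 * (ℓ : ℤ)) • ((φ z' : Fin g → ℤ)) →
      El φ ℓ z + z γ = El φ ℓ z' + z' γ' := by
    intro γ hγ γ' hγ' z z' heq
    set w : (Fin g → ℤ) →ₗ[ℤ] ℤ := z' - z with hw
    have happ : ∀ x : Fin g → ℤ, z' x = z x + w x := by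
      intro x; simp [hw]
    -- additivity of φ at z, w
    have haddY : φ z' = φ z + φ w := by
      apply Binj
      rw [map_add, hφ, hφ, hφ, hw, smul_sub]
      abel
    have hadd : ((φ z' : Y) : Fin g → ℤ)
        = ((φ z : Y) : Fin g → ℤ) + ((φ w : Y) : Fin g → ℤ) := by
      rw [haddY]; rfl
    have hnegY : φ (-w) = -(φ w) := by
      apply Binj
      rw [map_neg, hφ, hφ, smul_neg]
    have hneg : ((φ (-w) : Y) : Fin g → ℤ) = -((φ w : Y) : Fin g → ℤ) := by
      rw [hnegY]; rfl
    have hbs : z ((φ w : Y) : Fin g → ℤ) = w ((φ z : Y) : Fin g → ℤ) := hsymm z w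
    -- apply z and w to heq
    have hez : z γ + 2 * (ℓ : ℤ) * z ((φ z : Y) : Fin g → ℤ)
        = z γ' + 2 * (ℓ : ℤ) * (z ((φ z : Y) : Fin g → ℤ) + z ((φ w : Y) : Fin g → ℤ)) := by
      have h := congrArg (fun x => z x) heq
      simp only [map_add, map_smul, smul_eq_mul, hadd] at h
      linarith [h]
    have hew : w γ + 2 * (ℓ : ℤ) * w ((φ z : Y) : Fin g → ℤ)
        = w γ' + 2 * (ℓ : ℤ) * (w ((φ z : Y) : Fin g → ℤ) + w ((φ w : Y) : Fin g → ℤ)) := by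
      have h := congrArg (fun x => w x) heq
      simp only [map_add, map_smul, smul_eq_mul, hadd] at h
      linarith [h]
    have h1 := hγ' w
    have h2 := hγ (-w)
    simp only [El] at h1 h2 ⊢
    rw [hneg] at h2
    simp only [map_neg, LinearMap.neg_apply, neg_neg, mul_neg, neg_mul] at h2
    rw [hbs] at hez
    have e1 : z' ((φ z' : Y) : Fin g → ℤ)
        = z ((φ z : Y) : Fin g → ℤ) + w ((φ z : Y) : Fin g → ℤ)
          + (z ((φ w : Y) : Fin g → ℤ) + w ((φ w : Y) : Fin g → ℤ)) := by
      rw [hadd, map_add, happ _, happ _]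
      try ring
    rw [hbs] at e1
    have e2 : z' γ' = z γ' + w γ' := happ γ'
    rw [e1, e2]
    linarith [h1, h2, hez, hew]
  refine ⟨key, ?_⟩
  refine ⟨fun x =>
    if h : ∃ γ0, γ0 ∈ SigmaL φ ℓ ∧ ∃ z0 : (Fin g → ℤ) →ₗ[ℤ] ℤ,
        x = γ0 + (2 * (ℓ : ℤ)) • ((φ z0 : Fin g → ℤ))
    then El φ ℓ h.choose_spec.2.choose + h.choose_spec.2.choose h.choose
    else 0, ?_⟩
  intro γ hγ z
  have hx : ∃ γ0, γ0 ∈ SigmaL φ ℓ ∧ ∃ z0 : (Fin g → ℤ) →ₗ[ℤ] ℤ,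
      γ + (2 * (ℓ : ℤ)) • ((φ z : Fin g → ℤ))
        = γ0 + (2 * (ℓ : ℤ)) • ((φ z0 : Fin g → ℤ)) := ⟨γ, hγ, z, rfl⟩
  beta_reduce
  rw [dif_pos hx]
  exact key _ hx.choose_spec.1 _ hγ _ _ hx.choose_spec.2.choose_spec.symm

end NFC
end

section
/- For γ ∈ Σ_ℓ, z ∈ X^∨ and x := γ + 2ℓφ(z) one has D_ℓ(x) = C_ℓ(x) − C_ℓ(γ); in particular D_ℓ(x) ≤ C_ℓ(x), with equality if and only if γ = 0, i.e. if and only if x ∈ 2ℓφ(X^∨). -/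
open scoped BigOperators Pointwise

namespace NFC

/-- for `x = γ + 2ℓφ(z)` with `γ ∈ Σ_ℓ`, `D_ℓ(x) = C_ℓ(x) − C_ℓ(γ)`;
in particular `D_ℓ(x) ≤ C_ℓ(x)`, with equality iff `γ = 0`, i.e. iff `x ∈ 2ℓφ(X^∨)`,
where `C_ℓ(y) = B̄(y,y)/(4ℓN)`. -/
theorem statement8
    (g : ℕ) (hg : 1 ≤ g)
    (Y : Submodule ℤ (Fin g → ℤ))
    (hYfin : Y.toAddSubgroup.index ≠ 0)
    (B : Y →ₗ[ℤ] (Fin g → ℤ) →ₗ[ℤ] ℤ)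
    (hBsymm : ∀ y z : Y, B y (z : Fin g → ℤ) = B z (y : Fin g → ℤ))
    (hBpos : ∀ y : Y, y ≠ 0 → 0 < B y (y : Fin g → ℤ))
    (N : ℕ) (hN : N = (LinearMap.range B).toAddSubgroup.index) (hNpos : 0 < N)
    (φ : ((Fin g → ℤ) →ₗ[ℤ] ℤ) → Y)
    (hφ : ∀ u : (Fin g → ℤ) →ₗ[ℤ] ℤ, B (φ u) = (N : ℤ) • u)
    (Bb : (Fin g → ℝ) →ₗ[ℝ] (Fin g → ℝ) →ₗ[ℝ] ℝ)
    (hBbsymm : ∀ x y : Fin g → ℝ, Bb x y = Bb y x)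
    (hBbpos : ∀ x : Fin g → ℝ, x ≠ 0 → 0 < Bb x x)
    (hBbcompat : ∀ (y : Y) (x : Fin g → ℤ), Bb (iota (y : Fin g → ℤ)) (iota x) = (B y x : ℝ))
    (ℓ : ℕ) (hℓ : 0 < ℓ)
    (γ : Fin g → ℤ) (hγ : γ ∈ SigmaL φ ℓ) (z : (Fin g → ℤ) →ₗ[ℤ] ℤ)
    (x : Fin g → ℤ) (hx : x = γ + (2 * (ℓ : ℤ)) • ((φ z : Fin g → ℤ))) :
    ((El φ ℓ z + z γ : ℤ) : ℝ) =
        Bb (iota x) (iota x) / (4 * (ℓ : ℝ) * (N : ℝ)) -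
        Bb (iota γ) (iota γ) / (4 * (ℓ : ℝ) * (N : ℝ)) ∧
    ((El φ ℓ z + z γ : ℤ) : ℝ) ≤ Bb (iota x) (iota x) / (4 * (ℓ : ℝ) * (N : ℝ)) ∧
    (((El φ ℓ z + z γ : ℤ) : ℝ) = Bb (iota x) (iota x) / (4 * (ℓ : ℝ) * (N : ℝ)) ↔ γ = 0) ∧
    (γ = 0 ↔ ∃ u : (Fin g → ℤ) →ₗ[ℤ] ℤ, x = (2 * (ℓ : ℤ)) • ((φ u : Fin g → ℤ))) := by
  have hiota0 : iota (0 : Fin g → ℤ) = 0 := by funext i; simp [iota]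
  have hiota_zero : ∀ a : Fin g → ℤ, iota a = 0 ↔ a = 0 := by
    intro a
    constructor
    · intro h
      funext i
      have := congrFun h i
      simpa [iota] using this
    · intro h; subst h; exact hiota0
  have hN0 : (N : ℝ) ≠ 0 := by positivity
  have hl0 : (ℓ : ℝ) ≠ 0 := by positivity
  have hBφ : ∀ (u : (Fin g → ℤ) →ₗ[ℤ] ℤ) (a : Fin g → ℤ),
      Bb (iota ((φ u : Fin g → ℤ))) (iota a) = (N : ℝ) * ((u a : ℤ) : ℝ) := by
    intro u a
    rw [hBbcompat (φ u) a, hφ u]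
    simp only [LinearMap.smul_apply, smul_eq_mul]
    push_cast
    ring
  have hιx : iota x = iota γ + (((2 * (ℓ : ℤ)) : ℤ) : ℝ) • iota ((φ z : Fin g → ℤ)) := by
    funext i
    rw [hx]
    simp only [iota, Pi.add_apply, Pi.smul_apply, smul_eq_mul]
    push_cast
    ring
  have h1 : Bb (iota ((φ z : Fin g → ℤ))) (iota γ) = (N : ℝ) * ((z γ : ℤ) : ℝ) := hBφ z γ
  have h2 : Bb (iota ((φ z : Fin g → ℤ))) (iota ((φ z : Fin g → ℤ)))
      = (N : ℝ) * ((z ((φ z : Fin g → ℤ)) : ℤ) : ℝ) := hBφ z _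
  have h3 : Bb (iota γ) (iota ((φ z : Fin g → ℤ))) = (N : ℝ) * ((z γ : ℤ) : ℝ) := by
    rw [hBbsymm]; exact h1
  have key : Bb (iota x) (iota x) = Bb (iota γ) (iota γ)
      + 4 * (ℓ : ℝ) * (N : ℝ) * ((z γ : ℤ) : ℝ)
      + 4 * (ℓ : ℝ) ^ 2 * (N : ℝ) * ((z ((φ z : Fin g → ℤ)) : ℤ) : ℝ) := by
    rw [hιx]
    simp only [map_add, map_smul, LinearMap.add_apply, LinearMap.smul_apply, smul_eq_mul,
      h1, h2, h3]
    push_cast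
    ring
  have main : ((El φ ℓ z + z γ : ℤ) : ℝ) =
      Bb (iota x) (iota x) / (4 * (ℓ : ℝ) * (N : ℝ)) -
      Bb (iota γ) (iota γ) / (4 * (ℓ : ℝ) * (N : ℝ)) := by
    rw [key]
    simp only [El]
    push_cast
    field_simp
    ring
  have hQ : 0 ≤ Bb (iota γ) (iota γ) := by
    rcases eq_or_ne γ 0 with h | h
    · rw [h, hiota0]; simp
    · exact le_of_lt (hBbpos _ fun hh => h ((hiota_zero γ).mp hh))
  have hCγ0 : Bb (iota γ) (iota γ) = 0 ↔ γ = 0 := by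
    constructor
    · intro h
      by_contra hne
      have := hBbpos (iota γ) (fun hh => hne ((hiota_zero γ).mp hh))
      linarith
    · intro h; rw [h, hiota0]; simp
  refine ⟨main, ?_, ?_, ?_⟩
  · rw [main]
    have h4 : 0 ≤ Bb (iota γ) (iota γ) / (4 * (ℓ : ℝ) * (N : ℝ)) := by positivity
    linarith
  · rw [main]
    constructor
    · intro h
      have hdiv : Bb (iota γ) (iota γ) / (4 * (ℓ : ℝ) * (N : ℝ)) = 0 := by linarith
      apply hCγ0.mp
      have h4 : (0 : ℝ) < 4 * (ℓ : ℝ) * (N : ℝ) := by positivity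
      field_simp at hdiv
      simpa using hdiv
    · intro h
      rw [hCγ0.mpr h, zero_div, sub_zero]
  · constructor
    · intro h
      exact ⟨z, by rw [hx, h, zero_add]⟩
    · rintro ⟨u, hu⟩
      -- B is injective
      have hBinj : ∀ v : Y, B v = 0 → v = 0 := by
        intro v hv
        by_contra hne
        have := hBpos v hne
        rw [hv] at this
        simp at this
      have hφsub : ∀ a b : (Fin g → ℤ) →ₗ[ℤ] ℤ, φ (a - b) = φ a - φ b := by
        intro a b
        have hB : B (φ (a - b) - (φ a - φ b)) = 0 := by
          rw [map_sub, map_sub, hφ, hφ, hφ, smul_sub, sub_self]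
        exact sub_eq_zero.mp (hBinj _ hB)
      set y : Y := φ u - φ z with hy
      have hγy : γ = (2 * (ℓ : ℤ)) • ((y : Fin g → ℤ)) := by
        have h : γ + (2 * (ℓ : ℤ)) • ((φ z : Fin g → ℤ)) = (2 * (ℓ : ℤ)) • ((φ u : Fin g → ℤ)) := by
          rw [← hx, hu]
        rw [hy, Submodule.coe_sub, smul_sub, ← h]
        abel
      have hφzu : φ (z - u) = -y := by
        rw [hφsub, hy, neg_sub]
      have hσ := hγ (z - u)
      rw [El, hφzu, hγy] at hσ
      simp only [map_smul, smul_eq_mul, LinearMap.sub_apply] at hσ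
      have hcoe : ((-y : Y) : Fin g → ℤ) = -((y : Y) : Fin g → ℤ) := by
        simp
      rw [hcoe] at hσ
      simp only [map_neg] at hσ
      set t : ℤ := z ((y : Fin g → ℤ)) - u ((y : Fin g → ℤ)) with ht
      have hσ' : 0 ≤ (ℓ : ℤ) * t := by
        have : (ℓ : ℤ) * (-(z ((y : Fin g → ℤ))) - -(u ((y : Fin g → ℤ))))
            + (2 * (ℓ : ℤ) * (z ((y : Fin g → ℤ))) - 2 * (ℓ : ℤ) * (u ((y : Fin g → ℤ)))) =
            (ℓ : ℤ) * t := by ring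
        linarith [hσ]
      have htnonneg : 0 ≤ t := by
        have hl : (0 : ℤ) < (ℓ : ℤ) := by exact_mod_cast hℓ
        nlinarith
      have hBy : B y ((y : Fin g → ℤ)) = -((N : ℤ) * t) := by
        have hBneg : B (-y) = (N : ℤ) • (z - u) := by rw [← hφzu, hφ]
        have h2 := congrArg (fun f => f ((y : Fin g → ℤ))) hBneg
        simp only [map_neg, LinearMap.neg_apply, LinearMap.smul_apply, LinearMap.sub_apply,
          smul_eq_mul] at h2
        rw [ht]
        linarith [h2]
      have hy0 : y = 0 := by
        by_contra hne
        have hp := hBpos y hne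
        have hNZ : (0 : ℤ) < (N : ℤ) := by exact_mod_cast hNpos
        have hNt : 0 ≤ (N : ℤ) * t := mul_nonneg hNZ.le htnonneg
        linarith [hBy, hp]
      rw [hγy, hy0]
      simp

end NFC
end
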